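/- If a topological group G contains a subgroup topologically isomorphic to the discrete group ℤ contained in the center of G, and G is non-discrete Hausdorff, then G admits a transversal group topology, provided G is abelian. (Abelian case: a non-discrete Hausdorff abelian topological group containing an infinite discrete cyclic subgroup admits a transversal group topology.) -/

import Mathlib

open Subgroup Filter Topology Set

/-- A non-discrete Hausdorff abelian topological group containing an element of
infinite order generating a discrete cyclic subgroup admits a transversal group
topology (a non-discrete Hausdorff group topology `σ` with `τ ⊓ σ = ⊥`). -/
theorem stmt_2 {G : Type*} [CommGroup G] [τ : TopologicalSpace G]
    [IsTopologicalGroup G] [T2Space G] (hnd : τ ≠ ⊥)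
    (g : G) (hg : ¬ IsOfFinOrder g)
    (hdisc : DiscreteTopology (Subgroup.zpowers g)) :
    ∃ σ : TopologicalSpace G,
      @IsTopologicalGroup G σ _ ∧ @T2Space G σ ∧ σ ≠ ⊥ ∧ τ ⊓ σ = ⊥ := by
  classical
  have hinj : Function.Injective fun n : ℤ => g ^ n :=
    injective_zpow_iff_not_isOfFinOrder.mpr hg
  -- monotonicity under divisibility
  have hle : ∀ a b : ℕ, a ∣ b →
      (Subgroup.zpowers (g ^ b) : Subgroup G) ≤ Subgroup.zpowers (g ^ a) := by
    rintro a b ⟨c, rfl⟩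
    rw [Subgroup.zpowers_le]
    exact ⟨(c : ℤ), by
      show (g ^ a) ^ (c : ℤ) = g ^ (a * c)
      rw [zpow_natCast, ← pow_mul]⟩
  -- the basis of subgroups
  set S : Set (Set G) :=
    Set.range (fun n : ℕ => ((Subgroup.zpowers (g ^ (n + 1)) : Subgroup G) : Set G)) with hSdef
  let B : GroupFilterBasis G := by
    refine groupFilterBasisOfComm S ⟨_, ⟨0, rfl⟩⟩ ?_ ?_ ?_ ?_
    · rintro x y ⟨a, rfl⟩ ⟨b, rfl⟩
      refine ⟨_, ⟨a * b + a + b, rfl⟩, fun z hz => ?_⟩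
      have h1 : (a + 1) ∣ (a * b + a + b + 1) := ⟨b + 1, by ring⟩
      have h2 : (b + 1) ∣ (a * b + a + b + 1) := ⟨a + 1, by ring⟩
      exact ⟨hle _ _ h1 hz, hle _ _ h2 hz⟩
    · rintro U ⟨n, rfl⟩
      exact (Subgroup.zpowers (g ^ (n + 1))).one_mem
    · rintro U ⟨n, rfl⟩
      refine ⟨_, ⟨n, rfl⟩, ?_⟩
      rintro z ⟨x, hx, y, hy, rfl⟩
      exact (Subgroup.zpowers (g ^ (n + 1))).mul_mem hx hy
    · rintro U ⟨n, rfl⟩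
      exact ⟨_, ⟨n, rfl⟩, fun x hx => (Subgroup.zpowers (g ^ (n + 1))).inv_mem hx⟩
  have hmemS : ∀ n : ℕ, ((Subgroup.zpowers (g ^ (n + 1)) : Subgroup G) : Set G) ∈ B :=
    fun n => ⟨n, rfl⟩
  refine ⟨B.topology, B.isTopologicalGroup, ?_, ?_, ?_⟩
  -- powers of g are nontrivial
  case _ =>
    -- Hausdorff
    letI := B.topology
    haveI : IsTopologicalGroup G := B.isTopologicalGroup
    refine IsTopologicalGroup.t2Space_of_one_sep fun x hx => ?_
    by_cases hxz : x ∈ Subgroup.zpowers g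
    · obtain ⟨m, rfl⟩ := Subgroup.mem_zpowers_iff.mp hxz
      have hm : m ≠ 0 := by rintro rfl; exact hx (zpow_zero g)
      refine ⟨_, B.mem_nhds_one (hmemS m.natAbs), fun hmem => ?_⟩
      obtain ⟨k, hk⟩ := Subgroup.mem_zpowers_iff.mp hmem
      rw [← zpow_natCast, ← zpow_mul] at hk
      have : ((m.natAbs : ℤ) + 1) * k = m := hinj (by push_cast at hk ⊢; exact hk)
      rcases eq_or_ne k 0 with rfl | hk0
      · simp at this; exact hm this.symm
      · have h1 : (m.natAbs : ℤ) + 1 ≤ |((m.natAbs : ℤ) + 1) * k| := by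
          rw [abs_mul]
          calc (m.natAbs : ℤ) + 1 = |(m.natAbs : ℤ) + 1| * 1 := by
                rw [mul_one, abs_of_pos]; positivity
            _ ≤ |(m.natAbs : ℤ) + 1| * |k| := by
                gcongr; exact Int.one_le_abs hk0
        rw [this, Int.abs_eq_natAbs] at h1
        omega
    · refine ⟨_, B.mem_nhds_one (hmemS 0), fun hmem => ?_⟩
      rw [pow_one] at hmem
      exact hxz hmem
  case _ =>
    -- non-discrete
    intro hbot
    have h1 : ({1} : Set G) ∈ @nhds G B.topology 1 := by
      rw [hbot, @nhds_discrete G ⊥ (discreteTopology_bot G)]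
      exact mem_pure.mpr rfl
    obtain ⟨U, hU, hU1⟩ := B.nhds_one_hasBasis.mem_iff.mp h1
    obtain ⟨n, rfl⟩ := hU
    have : g ^ (n + 1) ∈ ({1} : Set G) :=
      hU1 (Subgroup.mem_zpowers _)
    have : g ^ (n + 1) = 1 := this
    exact hg (isOfFinOrder_iff_pow_eq_one.mpr ⟨n + 1, by omega, this⟩)
  case _ =>
    -- transversality
    have hρg : @IsTopologicalGroup G (τ ⊓ B.topology) _ :=
      topologicalGroup_inf ‹IsTopologicalGroup G› B.isTopologicalGroup
    -- get a τ-open set meeting ⟨g⟩ only in 1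
    have hopen1 : IsOpen ({(1 : Subgroup.zpowers g)} : Set (Subgroup.zpowers g)) :=
      @isOpen_discrete _ _ hdisc _
    rw [isOpen_induced_iff] at hopen1
    obtain ⟨U, hUopen, hUeq⟩ := hopen1
    have hUcap : U ∩ (Subgroup.zpowers g : Set G) = {1} := by
      ext x
      constructor
      · rintro ⟨hxU, hxz⟩
        have : (⟨x, hxz⟩ : Subgroup.zpowers g) ∈ Subtype.val ⁻¹' U := hxU
        rw [hUeq] at this
        exact congrArg Subtype.val this
      · rintro rfl
        refine ⟨?_, (Subgroup.zpowers g).one_mem⟩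
        have : ((1 : Subgroup.zpowers g)) ∈ Subtype.val ⁻¹' U := by
          rw [hUeq]; rfl
        exact this
    -- ⟨g⟩ is open in B.topology
    have hzopen : @IsOpen G B.topology (Subgroup.zpowers g : Set G) := by
      letI := B.topology
      haveI : IsTopologicalGroup G := B.isTopologicalGroup
      refine Subgroup.isOpen_of_mem_nhds (g := 1) _ ?_
      have := B.mem_nhds_one (hmemS 0)
      rwa [pow_one] at this
    have hUρ : @IsOpen G (τ ⊓ B.topology) U := hUopen.mono inf_le_left
    have hzρ : @IsOpen G (τ ⊓ B.topology) (Subgroup.zpowers g : Set G) :=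
      hzopen.mono inf_le_right
    have hsingle : @IsOpen G (τ ⊓ B.topology) ({1} : Set G) := by
      letI := τ ⊓ B.topology
      rw [← hUcap]
      exact hUρ.inter hzρ
    have hdt : @DiscreteTopology G (τ ⊓ B.topology) := by
      letI := τ ⊓ B.topology
      haveI := hρg
      exact discreteTopology_iff_isOpen_singleton_one.mpr hsingle
    exact hdt.eq_bot
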